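/- Fix T > 0 and let ψ = (ψ_i)_{i ≥ 1} and ψ̃ = (ψ̃_i)_{i ≥ 1} be sequences of càdlàg paths on [0,T] with ψ_i(0) ≤ 1 and ψ̃_i(0) ≤ 1 for every i. Suppose (φ, η) solves the infinite-dimensional Skorokhod problem for ψ and (φ̃, η̃) solves it for ψ̃. Then for every M ≥ 1: sup_{t ∈ [0,T]} |η_M(t) − η̃_M(t)| ≤ Σ_{i=1}^{M} sup_{t ∈ [0,T]} |ψ_i(t) − ψ̃_i(t)| and sup_{t ∈ [0,T]} |φ_M(t) − φ̃_M(t)| ≤ 2·Σ_{i=1}^{M} sup_{t ∈ [0,T]} |ψ_i(t) − ψ̃_i(t)|. -/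

import Mathlib

open Set Filter MeasureTheory Topology

/-- A path `ψ : [0,T] → ℝ` is càdlàg: right-continuous on `[0,T)` (within the domain `[0,T]`)
and has left limits (within the domain) at every point of `(0,T]`. -/
def CadlagOn (T : ℝ) (ψ : ℝ → ℝ) : Prop :=
  (∀ t ∈ Ico (0 : ℝ) T, ContinuousWithinAt ψ (Icc t T) t) ∧
  (∀ t ∈ Ioc (0 : ℝ) T, ∃ l : ℝ, Tendsto ψ (nhdsWithin t (Ico 0 t)) (nhds l))

/-- The Lebesgue–Stieltjes measure on `[0,T]` induced by `η` assigns zero mass to the set `A`.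
It is encoded via the (unique) Stieltjes function on `ℝ` obtained by extending `η` from `[0,T]`
to `ℝ` constantly to the left of `0` and to the right of `T`. -/
lemma cadlag_bounded {T : ℝ} {ψ : ℝ → ℝ} (hc : CadlagOn T ψ) :
    ∃ C : ℝ, ∀ t ∈ Icc (0:ℝ) T, |ψ t| ≤ C := by
  have hloc : ∀ x ∈ Icc (0:ℝ) T, ∃ C : ℝ, ∃ U : Set ℝ, U ∈ 𝓝 x ∧
      ∀ s ∈ U ∩ Icc (0:ℝ) T, |ψ s| ≤ C := by
    intro x hx
    have hright : ∃ C : ℝ, ∀ᶠ s in 𝓝[Icc x T] x, |ψ s| ≤ C := by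
      rcases eq_or_lt_of_le hx.2 with hxe | hxl
      · refine ⟨|ψ x|, ?_⟩
        filter_upwards [self_mem_nhdsWithin] with s hs
        have : s = x := le_antisymm (hxe ▸ hs.2) hs.1
        simp [this]
      · have hcw := hc.1 x ⟨hx.1, hxl⟩
        have hb : ∀ᶠ y in 𝓝 (ψ x), y ∈ Metric.ball (ψ x) 1 := Metric.ball_mem_nhds _ one_pos
        refine ⟨|ψ x| + 1, ?_⟩
        filter_upwards [hcw.eventually hb] with s hs
        have : |ψ s - ψ x| < 1 := by simpa [Real.dist_eq] using hs
        calc |ψ s| ≤ |ψ x| + |ψ s - ψ x| := by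
              have := abs_sub_abs_le_abs_sub (ψ s) (ψ x); linarith
          _ ≤ |ψ x| + 1 := by linarith
    have hleft : ∃ C : ℝ, ∀ᶠ s in 𝓝[Ico 0 x] x, |ψ s| ≤ C := by
      rcases eq_or_lt_of_le hx.1 with hxe | hxl
      · refine ⟨0, ?_⟩
        have : Ico (0:ℝ) x = ∅ := by rw [← hxe, Ico_self]
        simp [this]
      · obtain ⟨l, hl⟩ := hc.2 x ⟨hxl, hx.2⟩
        have hb : ∀ᶠ y in 𝓝 l, y ∈ Metric.ball l 1 := Metric.ball_mem_nhds _ one_pos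
        refine ⟨|l| + 1, ?_⟩
        filter_upwards [hl.eventually hb] with s hs
        have : |ψ s - l| < 1 := by simpa [Real.dist_eq] using hs
        calc |ψ s| ≤ |l| + |ψ s - l| := by
              have := abs_sub_abs_le_abs_sub (ψ s) l; linarith
          _ ≤ |l| + 1 := by linarith
    obtain ⟨C1, h1⟩ := hright
    obtain ⟨C2, h2⟩ := hleft
    have hsub : Icc (0:ℝ) T ⊆ Icc x T ∪ Ico 0 x := by
      intro s hs
      rcases le_or_gt x s with h | h
      · exact Or.inl ⟨h, hs.2⟩
      · exact Or.inr ⟨hs.1, h⟩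
    have hev : ∀ᶠ s in 𝓝[Icc (0:ℝ) T] x, |ψ s| ≤ max C1 C2 := by
      have h1' : ∀ᶠ s in 𝓝[Icc x T] x, |ψ s| ≤ max C1 C2 :=
        h1.mono fun s hs => hs.trans (le_max_left _ _)
      have h2' : ∀ᶠ s in 𝓝[Ico 0 x] x, |ψ s| ≤ max C1 C2 :=
        h2.mono fun s hs => hs.trans (le_max_right _ _)
      have : ∀ᶠ s in 𝓝[Icc x T ∪ Ico 0 x] x, |ψ s| ≤ max C1 C2 := by
        rw [nhdsWithin_union]; exact eventually_sup.mpr ⟨h1', h2'⟩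
      exact this.filter_mono (nhdsWithin_mono x hsub)
    obtain ⟨U, hUo, hxU, hUsub⟩ := mem_nhdsWithin.mp hev
    exact ⟨max C1 C2, U, hUo.mem_nhds hxU, fun s hs => hUsub hs⟩
  choose! C U hU hB using hloc
  rcases (isCompact_Icc : IsCompact (Icc (0:ℝ) T)).elim_nhds_subcover U
    (fun x hx => hU x hx) with ⟨t, ht, hcov⟩
  refine ⟨∑ x ∈ t, |C x|, fun s hs => ?_⟩
  obtain ⟨x, hxt, hsx⟩ : ∃ x ∈ t, s ∈ U x := by simpa using hcov hs
  calc |ψ s| ≤ C x := hB x (ht x hxt) s ⟨hsx, hs⟩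
    _ ≤ |C x| := le_abs_self _
    _ ≤ ∑ y ∈ t, |C y| := Finset.single_le_sum (f := fun y => |C y|) (fun y _ => abs_nonneg _) hxt

def ZeroMassOn (T : ℝ) (η : ℝ → ℝ) (A : Set ℝ) : Prop :=
  ∃ f : StieltjesFunction ℝ, (∀ t : ℝ, f t = η (max 0 (min t T))) ∧ f.measure A = 0

/-- `(φ, η)` solves the infinite-dimensional Skorokhod problem on `[0,T]` for `ψ`, associated
with the reflection matrix `R_∞`.  Components are indexed by `ℕ`, where Lean index `i`
corresponds to the paper's coordinate `i + 1` (so `φ 0` is the paper's `φ_1`, etc.), and the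
paper's `η_0 ≡ 0` is built into the equation for the first coordinate. -/
lemma skorokhod_formula {T : ℝ} (hT : 0 < T) {ζ η φ : ℝ → ℝ}
    (hbdd : BddAbove ((fun s => ζ s - 1) '' Icc 0 T))
    (hφ : ∀ t ∈ Icc (0:ℝ) T, φ t = ζ t - η t)
    (hle : ∀ t ∈ Icc (0:ℝ) T, φ t ≤ 1)
    (hη0 : η 0 = 0) (hmono : MonotoneOn η (Icc 0 T))
    (hzm : ZeroMassOn T η {t ∈ Icc (0:ℝ) T | φ t < 1}) :
    ∀ t ∈ Icc (0:ℝ) T, η t = max 0 (sSup ((fun s => ζ s - 1) '' Icc 0 t)) := by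
  intro t ht
  set A := (fun s => ζ s - 1) '' Icc 0 t with hA
  have hsubI : Icc (0:ℝ) t ⊆ Icc 0 T := Icc_subset_Icc le_rfl ht.2
  have hAne : A.Nonempty := ⟨ζ 0 - 1, mem_image_of_mem _ (left_mem_Icc.mpr ht.1)⟩
  have hAbdd : BddAbove A := hbdd.mono (image_mono hsubI)
  set S := max 0 (sSup A) with hS
  have hS0 : 0 ≤ S := le_max_left _ _
  have hmemA : ∀ s ∈ Icc (0:ℝ) t, ζ s - 1 ≤ S :=
    fun s hs => (le_csSup hAbdd (mem_image_of_mem _ hs)).trans (le_max_right _ _)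
  -- lower bound
  have hge : S ≤ η t := by
    have h1 : sSup A ≤ η t := by
      apply csSup_le hAne
      rintro a ⟨s, hs, rfl⟩
      have hsT := hsubI hs
      have : ζ s - η s ≤ 1 := by rw [← hφ s hsT]; exact hle s hsT
      have : ζ s - 1 ≤ η s := by linarith
      exact this.trans (hmono hsT ht hs.2)
    have h0 : (0:ℝ) ≤ η t := by
      rw [← hη0]; exact hmono (left_mem_Icc.mpr (le_of_lt hT)) ht ht.1
    exact max_le h0 h1
  -- upper bound
  have hlt : η t ≤ S := by
    by_contra hcon
    push_neg at hcon
    obtain ⟨f, hf, hmeas⟩ := hzm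
    have hfeq : ∀ s ∈ Icc (0:ℝ) T, f s = η s := by
      intro s hs
      rw [hf s, min_eq_left hs.2, max_eq_right hs.1]
    set E := {s ∈ Icc (0:ℝ) t | η s ≤ S} with hE
    have h0E : (0:ℝ) ∈ E := ⟨left_mem_Icc.mpr ht.1, by rw [hη0]; exact hS0⟩
    have hEne : E.Nonempty := ⟨0, h0E⟩
    have hEbdd : BddAbove E := ⟨t, fun s hs => hs.1.2⟩
    set u := sSup E with hu
    have hu0 : 0 ≤ u := le_csSup hEbdd h0E
    have hut : u ≤ t := csSup_le hEne fun s hs => hs.1.2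
    have huI : u ∈ Icc (0:ℝ) t := ⟨hu0, hut⟩
    have huT : u ∈ Icc (0:ℝ) T := hsubI huI
    -- above u, η exceeds S, so φ < 1
    have hgt : ∀ s, u < s → s ≤ t → S < η s := by
      intro s hus hst
      by_contra hns
      push_neg at hns
      have : s ∈ E := ⟨⟨hu0.trans hus.le, hst⟩, hns⟩
      exact absurd (le_csSup hEbdd this) (not_le.mpr hus)
    have hφlt : ∀ s, u < s → s ≤ t → φ s < 1 := by
      intro s hus hst
      have hsI : s ∈ Icc (0:ℝ) t := ⟨hu0.trans hus.le, hst⟩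
      rw [hφ s (hsubI hsI)]
      have := hmemA s hsI
      have := hgt s hus hst
      linarith
    rcases le_or_gt (η u) S with hcase | hcase
    · -- case 1 : η u ≤ S, use Ioc u t
      rcases eq_or_lt_of_le hut with heq | hult
      · rw [heq] at hcase; exact absurd hcase (not_le.mpr hcon)
      have hsub : Ioc u t ⊆ {s ∈ Icc (0:ℝ) T | φ s < 1} := by
        rintro s ⟨h1, h2⟩
        exact ⟨hsubI ⟨hu0.trans h1.le, h2⟩, hφlt s h1 h2⟩
      have : f.measure (Ioc u t) = 0 := measure_mono_null hsub hmeas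
      rw [StieltjesFunction.measure_Ioc] at this
      rw [hfeq u huT, hfeq t ht] at this
      have : η t - η u ≤ 0 := by
        by_contra hpos
        push_neg at hpos
        rw [ENNReal.ofReal_eq_zero] at this
        linarith
      linarith
    · -- case 2 : η u > S, use Icc u t
      have hφu : φ u < 1 := by
        rw [hφ u huT]
        have := hmemA u huI
        linarith
      have hsub : Icc u t ⊆ {s ∈ Icc (0:ℝ) T | φ s < 1} := by
        rintro s ⟨h1, h2⟩
        rcases eq_or_lt_of_le h1 with rfl | h1'
        · exact ⟨huT, hφu⟩
        · exact ⟨hsubI ⟨hu0.trans h1, h2⟩, hφlt s h1' h2⟩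
      have hm0 : f.measure (Icc u t) = 0 := measure_mono_null hsub hmeas
      rw [StieltjesFunction.measure_Icc] at hm0
      -- leftLim f u ≤ S
      have hfS : ∀ s, s < u → f s ≤ S := by
        intro s hs
        rcases lt_or_ge s 0 with hs0 | hs0
        · rw [hf s, min_eq_left (hs0.le.trans hT.le), max_eq_left (by linarith), hη0]
          exact hS0
        · obtain ⟨e, heE, hse⟩ := exists_lt_of_lt_csSup hEne hs
          have heI := heE.1
          rw [hfeq s (hsubI ⟨hs0, (hs.le.trans hut)⟩)]
          exact (hmono (hsubI ⟨hs0, hse.le.trans heI.2⟩) (hsubI heI) hse.le).trans heE.2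
      have hu0' : 0 < u := by
        rcases eq_or_lt_of_le hu0 with heq | h
        · rw [← heq, hη0] at hcase; exact absurd hS0 (not_le.mpr hcase)
        · exact h
      have hll : Function.leftLim f u ≤ S := by
        rw [f.mono.leftLim_eq_sSup]
        apply csSup_le (by exact ⟨f 0, mem_image_of_mem _ hu0'⟩)
        rintro a ⟨s, hs, rfl⟩
        exact hfS s hs
      have : η t ≤ Function.leftLim f u := by
        by_contra hpos
        push_neg at hpos
        rw [hfeq t ht, ENNReal.ofReal_eq_zero] at hm0
        linarith
      linarith
  exact le_antisymm hlt hge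

def SolvesSPInf (T : ℝ) (ψ φ η : ℕ → ℝ → ℝ) : Prop :=
  (∀ t ∈ Set.Icc (0 : ℝ) T, φ 0 t = ψ 0 t - η 0 t) ∧
  (∀ i : ℕ, ∀ t ∈ Set.Icc (0 : ℝ) T, φ (i + 1) t = ψ (i + 1) t + η i t - η (i + 1) t) ∧
  (∀ i : ℕ, ∀ t ∈ Set.Icc (0 : ℝ) T, φ i t ≤ 1) ∧
  (∀ i : ℕ, η i 0 = 0 ∧ MonotoneOn (η i) (Set.Icc 0 T) ∧
    (∀ t ∈ Set.Icc (0 : ℝ) T, ContinuousWithinAt (η i) (Set.Icc t T) t) ∧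
    ZeroMassOn T (η i) {t ∈ Set.Icc (0 : ℝ) T | φ i t < 1})


def zeta (ψ η : ℕ → ℝ → ℝ) : ℕ → ℝ → ℝ
  | 0 => ψ 0
  | (j+1) => fun s => ψ (j+1) s + η j s

@[simp] lemma zeta_zero (ψ η : ℕ → ℝ → ℝ) : zeta ψ η 0 = ψ 0 := rfl
@[simp] lemma zeta_succ (ψ η : ℕ → ℝ → ℝ) (j : ℕ) (s : ℝ) :
    zeta ψ η (j+1) s = ψ (j+1) s + η j s := rfl

/-- comparison of the reflection suprema -/
lemma sup_comparison {T : ℝ} {t D : ℝ} (ht : t ∈ Icc (0:ℝ) T) (hD : 0 ≤ D)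
    {ζ ζ' : ℝ → ℝ}
    (hbdd : BddAbove ((fun s => ζ s - 1) '' Icc 0 T))
    (hbdd' : BddAbove ((fun s => ζ' s - 1) '' Icc 0 T))
    (hd : ∀ s ∈ Icc (0:ℝ) T, |ζ s - ζ' s| ≤ D) :
    |max 0 (sSup ((fun s => ζ s - 1) '' Icc 0 t)) -
      max 0 (sSup ((fun s => ζ' s - 1) '' Icc 0 t))| ≤ D := by
  have hsubI : Icc (0:ℝ) t ⊆ Icc 0 T := Icc_subset_Icc le_rfl ht.2
  have hne : (Icc (0:ℝ) t).Nonempty := ⟨0, left_mem_Icc.mpr ht.1⟩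
  have key : ∀ (g g' : ℝ → ℝ), BddAbove ((fun s => g' s - 1) '' Icc 0 T) →
      (∀ s ∈ Icc (0:ℝ) T, g s - g' s ≤ D) →
      max 0 (sSup ((fun s => g s - 1) '' Icc 0 t)) ≤
        max 0 (sSup ((fun s => g' s - 1) '' Icc 0 t)) + D := by
    intro g g' hb' hdd
    have hb't : BddAbove ((fun s => g' s - 1) '' Icc 0 t) := hb'.mono (image_mono hsubI)
    apply max_le
    · have : (0:ℝ) ≤ max 0 (sSup ((fun s => g' s - 1) '' Icc 0 t)) := le_max_left _ _
      linarith
    · apply csSup_le (hne.image _)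
      rintro a ⟨s, hs, rfl⟩
      show g s - 1 ≤ _
      have h1 : g s - 1 ≤ (g' s - 1) + D := by have := hdd s (hsubI hs); linarith
      have h2 : g' s - 1 ≤ sSup ((fun s => g' s - 1) '' Icc 0 t) :=
        le_csSup hb't (mem_image_of_mem _ hs)
      have h3 : sSup ((fun s => g' s - 1) '' Icc 0 t) ≤
          max 0 (sSup ((fun s => g' s - 1) '' Icc 0 t)) := le_max_right _ _
      linarith
  have h1 := key ζ ζ' hbdd' (fun s hs => (abs_le.mp (hd s hs)).2)
  have h2 := key ζ' ζ hbdd (fun s hs => by have := (abs_le.mp (hd s hs)).1; linarith)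
  rw [abs_le]; constructor <;> linarith

/-- Coordinatewise Lipschitz property of the infinite-dimensional Skorokhod map: for every
`M` (Lean index `M` is the paper's coordinate `M + 1 ≥ 1`),
`sup_{[0,T]} |η_M - η̃_M| ≤ ∑_{i=1}^{M} sup_{[0,T]} |ψ_i - ψ̃_i|` and
`sup_{[0,T]} |φ_M - φ̃_M| ≤ 2 ∑_{i=1}^{M} sup_{[0,T]} |ψ_i - ψ̃_i|`. -/
theorem skorokhod_inf_dim_coord_lipschitz (T : ℝ) (hT : 0 < T) (ψ ψ' : ℕ → ℝ → ℝ)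
    (hcad : ∀ i : ℕ, CadlagOn T (ψ i)) (hcad' : ∀ i : ℕ, CadlagOn T (ψ' i))
    (hψ0 : ∀ i : ℕ, ψ i 0 ≤ 1) (hψ0' : ∀ i : ℕ, ψ' i 0 ≤ 1)
    (φ η φ' η' : ℕ → ℝ → ℝ)
    (h : SolvesSPInf T ψ φ η) (h' : SolvesSPInf T ψ' φ' η') :
    ∀ M : ℕ,
      (∀ t ∈ Set.Icc (0 : ℝ) T,
        |η M t - η' M t| ≤
          ∑ i ∈ Finset.range (M + 1), ⨆ s : Set.Icc (0 : ℝ) T, |ψ i s - ψ' i s|) ∧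
      (∀ t ∈ Set.Icc (0 : ℝ) T,
        |φ M t - φ' M t| ≤
          2 * ∑ i ∈ Finset.range (M + 1), ⨆ s : Set.Icc (0 : ℝ) T, |ψ i s - ψ' i s|) := by
  obtain ⟨heq0, heqs, hle, hprop⟩ := h
  obtain ⟨heq0', heqs', hle', hprop'⟩ := h'
  -- sup bounds
  set D : ℕ → ℝ := fun i => ⨆ s : Set.Icc (0 : ℝ) T, |ψ i s - ψ' i s| with hD
  have hDb : ∀ i : ℕ, ∀ s ∈ Icc (0:ℝ) T, |ψ i s - ψ' i s| ≤ D i := by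
    intro i s hs
    obtain ⟨C1, hC1⟩ := cadlag_bounded (hcad i)
    obtain ⟨C2, hC2⟩ := cadlag_bounded (hcad' i)
    have hb : BddAbove (Set.range fun s : Set.Icc (0:ℝ) T => |ψ i s - ψ' i s|) := by
      refine ⟨C1 + C2, ?_⟩
      rintro a ⟨x, rfl⟩
      calc |ψ i x - ψ' i x| ≤ |ψ i x| + |ψ' i x| := abs_sub _ _
        _ ≤ C1 + C2 := add_le_add (hC1 x x.2) (hC2 x x.2)
    exact le_ciSup hb (⟨s, hs⟩ : Set.Icc (0:ℝ) T)
  have hD0 : ∀ i, 0 ≤ D i := fun i =>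
    (abs_nonneg _).trans (hDb i 0 (left_mem_Icc.mpr hT.le))
  set K : ℕ → ℝ := fun i => ∑ j ∈ Finset.range (i + 1), D j with hK
  have hK0 : ∀ i, 0 ≤ K i := fun i => Finset.sum_nonneg fun j _ => hD0 j
  have hKs : ∀ i, K (i + 1) = K i + D (i + 1) := fun i => by simp [hK, Finset.sum_range_succ]
  -- zeta
  set ζ : ℕ → ℝ → ℝ := zeta ψ η with hζ
  set ζ' : ℕ → ℝ → ℝ := zeta ψ' η' with hζ'
  have hζbdd : ∀ i, BddAbove ((fun s => ζ i s - 1) '' Icc 0 T) := by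
    intro i
    obtain ⟨C1, hC1⟩ := cadlag_bounded (hcad i)
    match i with
    | 0 =>
      refine ⟨C1, ?_⟩; rintro a ⟨s, hs, rfl⟩
      have := (abs_le.mp (hC1 s hs)).2; simp only [hζ, hζ', zeta_zero, zeta_succ]; linarith
    | (j+1) =>
      refine ⟨C1 + η j T, ?_⟩; rintro a ⟨s, hs, rfl⟩
      have h1 := (abs_le.mp (hC1 s hs)).2
      have h2 := (hprop j).2.1 hs (right_mem_Icc.mpr hT.le) hs.2
      simp only [hζ, hζ', zeta_zero, zeta_succ]; linarith
  have hζbdd' : ∀ i, BddAbove ((fun s => ζ' i s - 1) '' Icc 0 T) := by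
    intro i
    obtain ⟨C1, hC1⟩ := cadlag_bounded (hcad' i)
    match i with
    | 0 =>
      refine ⟨C1, ?_⟩; rintro a ⟨s, hs, rfl⟩
      have := (abs_le.mp (hC1 s hs)).2; simp only [hζ, hζ', zeta_zero, zeta_succ]; linarith
    | (j+1) =>
      refine ⟨C1 + η' j T, ?_⟩; rintro a ⟨s, hs, rfl⟩
      have h1 := (abs_le.mp (hC1 s hs)).2
      have h2 := (hprop' j).2.1 hs (right_mem_Icc.mpr hT.le) hs.2
      simp only [hζ, hζ', zeta_zero, zeta_succ]; linarith
  have hform : ∀ i, ∀ t ∈ Icc (0:ℝ) T,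
      η i t = max 0 (sSup ((fun s => ζ i s - 1) '' Icc 0 t)) := by
    intro i
    refine skorokhod_formula hT (hζbdd i) ?_ (hle i) (hprop i).1 (hprop i).2.1 ?_
    · match i with
      | 0 => exact heq0
      | (j+1) =>
        intro t ht
        show φ (j+1) t = (ψ (j+1) t + η j t) - η (j+1) t
        rw [heqs j t ht]
    · exact (hprop i).2.2.2
  have hform' : ∀ i, ∀ t ∈ Icc (0:ℝ) T,
      η' i t = max 0 (sSup ((fun s => ζ' i s - 1) '' Icc 0 t)) := by
    intro i
    refine skorokhod_formula hT (hζbdd' i) ?_ (hle' i) (hprop' i).1 (hprop' i).2.1 ?_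
    · match i with
      | 0 => exact heq0'
      | (j+1) =>
        intro t ht
        show φ' (j+1) t = (ψ' (j+1) t + η' j t) - η' (j+1) t
        rw [heqs' j t ht]
    · exact (hprop' i).2.2.2
  -- main induction
  have hmain : ∀ i, ∀ t ∈ Icc (0:ℝ) T, |η i t - η' i t| ≤ K i := by
    intro i
    induction i with
    | zero =>
      intro t ht
      rw [hform 0 t ht, hform' 0 t ht]
      have : K 0 = D 0 := by simp [hK]
      rw [this]
      exact sup_comparison ht (hD0 0) (hζbdd 0) (hζbdd' 0) (fun s hs => hDb 0 s hs)
    | succ j ih =>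
      intro t ht
      rw [hform (j+1) t ht, hform' (j+1) t ht, hKs j]
      apply sup_comparison ht (by have := hK0 j; have := hD0 (j+1); linarith)
        (hζbdd (j+1)) (hζbdd' (j+1))
      intro s hs
      have h1 := hDb (j+1) s hs
      have h2 := ih s hs
      calc |ζ (j+1) s - ζ' (j+1) s|
          = |(ψ (j+1) s - ψ' (j+1) s) + (η j s - η' j s)| := by
            simp only [hζ, hζ', zeta_succ]; ring_nf
        _ ≤ |ψ (j+1) s - ψ' (j+1) s| + |η j s - η' j s| := abs_add_le _ _
        _ ≤ K j + D (j+1) := by linarith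
  intro M
  refine ⟨fun t ht => hmain M t ht, ?_⟩
  intro t ht
  match M with
  | 0 =>
    have e1 := heq0 t ht
    have e2 := heq0' t ht
    have h1 := hDb 0 t ht
    have h2 := hmain 0 t ht
    have hk : K 0 = D 0 := by simp [hK]
    calc |φ 0 t - φ' 0 t| = |(ψ 0 t - ψ' 0 t) - (η 0 t - η' 0 t)| := by rw [e1, e2]; ring_nf
      _ ≤ |ψ 0 t - ψ' 0 t| + |η 0 t - η' 0 t| := abs_sub _ _
      _ ≤ 2 * K 0 := by rw [hk] at h2 ⊢; linarith
  | (j+1) =>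
    have e1 := heqs j t ht
    have e2 := heqs' j t ht
    have h1 := hDb (j+1) t ht
    have h2 := hmain j t ht
    have h3 := hmain (j+1) t ht
    calc |φ (j+1) t - φ' (j+1) t|
        = |(ψ (j+1) t - ψ' (j+1) t) + (η j t - η' j t) - (η (j+1) t - η' (j+1) t)| := by
          rw [e1, e2]; ring_nf
      _ ≤ |(ψ (j+1) t - ψ' (j+1) t) + (η j t - η' j t)| + |η (j+1) t - η' (j+1) t| :=
          abs_sub _ _
      _ ≤ (|ψ (j+1) t - ψ' (j+1) t| + |η j t - η' j t|) + |η (j+1) t - η' (j+1) t| := by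
          have := abs_add_le (ψ (j+1) t - ψ' (j+1) t) (η j t - η' j t); linarith
      _ ≤ 2 * K (j+1) := by rw [hKs j] at h3 ⊢; linarith
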